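/- For every integer n ≥ 5, max{ SO₅(M_{n,i}) : i ∈ { ⌊c₀n⌋ − 1, ⌊c₀n⌋, ⌈c₀n⌉ } } > SO₅(S_n), where S_n is the star on n vertices. -/

import Mathlib

/-- `f a b = |a² − b²| / (√2 + 2√(a² + b²))`. -/
noncomputable def f (a b : ℝ) : ℝ :=
  |a ^ 2 - b ^ 2| / (Real.sqrt 2 + 2 * Real.sqrt (a ^ 2 + b ^ 2))

theorem f_symm (a b : ℝ) : f a b = f b a := by
  unfold f; rw [abs_sub_comm, add_comm (a ^ 2)]

/-- The Sombor-index-like invariant `SO₅(G) = 2π · Σ_{uv ∈ E(G)} f(d(u), d(v))`. -/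
noncomputable def SO5 {V : Type*} [Fintype V] [DecidableEq V] (G : SimpleGraph V)
    [DecidableRel G.Adj] : ℝ :=
  2 * Real.pi * ∑ e ∈ G.edgeFinset,
    Sym2.lift ⟨fun u v => f (G.degree u) (G.degree v),
      fun u v => f_symm (G.degree u) (G.degree v)⟩ e

/-- `M n k` : the join of the empty graph on `n − k` vertices with the complete graph `K_k`,
realized on `Fin n` with the first `k` vertices forming the clique. -/
def Mgraph (n k : ℕ) : SimpleGraph (Fin n) where
  Adj u v := u ≠ v ∧ ((u : ℕ) < k ∨ (v : ℕ) < k)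
  symm := ⟨fun _ _ ⟨h1, h2⟩ => ⟨h1.symm, h2.symm⟩⟩
  loopless := ⟨fun _ h => h.1 rfl⟩

instance (n k : ℕ) : DecidableRel (Mgraph n k).Adj := fun u v =>
  inferInstanceAs (Decidable (u ≠ v ∧ ((u : ℕ) < k ∨ (v : ℕ) < k)))

/-- The star graph on `n` vertices, realized on `Fin n` with center `⟨0, _⟩`. -/
def starGraph (n : ℕ) : SimpleGraph (Fin n) where
  Adj u v := u ≠ v ∧ ((u : ℕ) = 0 ∨ (v : ℕ) = 0)
  symm := ⟨fun _ _ ⟨h1, h2⟩ => ⟨h1.symm, h2.symm⟩⟩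
  loopless := ⟨fun _ h => h.1 rfl⟩

instance (n : ℕ) : DecidableRel (starGraph n).Adj := fun u v =>
  inferInstanceAs (Decidable (u ≠ v ∧ ((u : ℕ) = 0 ∨ (v : ℕ) = 0)))

section Aux

open Finset

lemma card_filter_lt (n k : ℕ) (hk : k ≤ n) :
    ((univ : Finset (Fin n)).filter (fun v : Fin n => (v : ℕ) < k)).card = k := by
  have himg : ((univ : Finset (Fin n)).filter (fun v : Fin n => (v : ℕ) < k)).image Fin.val
      = Finset.range k := by
    ext m
    simp only [mem_image, mem_filter, mem_univ, true_and, mem_range]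
    constructor
    · rintro ⟨a, ha, rfl⟩; exact ha
    · intro hm; exact ⟨⟨m, lt_of_lt_of_le hm hk⟩, hm, rfl⟩
  calc ((univ : Finset (Fin n)).filter (fun v : Fin n => (v : ℕ) < k)).card
      = (((univ : Finset (Fin n)).filter (fun v : Fin n => (v : ℕ) < k)).image Fin.val).card :=
        (Finset.card_image_of_injective _ Fin.val_injective).symm
    _ = (Finset.range k).card := by rw [himg]
    _ = k := Finset.card_range k

lemma deg_lt (n k : ℕ) (u : Fin n) (hu : (u : ℕ) < k) :
    (Mgraph n k).degree u = n - 1 := by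
  have h : (Mgraph n k).neighborFinset u = univ.erase u := by
    ext v
    simp only [SimpleGraph.mem_neighborFinset, Finset.mem_erase, Finset.mem_univ, and_true]
    constructor
    · rintro ⟨h1, -⟩; exact h1.symm
    · intro h1; exact ⟨h1.symm, Or.inl hu⟩
  rw [SimpleGraph.degree, h, Finset.card_erase_of_mem (mem_univ u), Finset.card_univ,
    Fintype.card_fin]

lemma deg_ge (n k : ℕ) (u : Fin n) (hu : k ≤ (u : ℕ)) :
    (Mgraph n k).degree u = k := by
  have h : (Mgraph n k).neighborFinset u = univ.filter (fun v : Fin n => (v : ℕ) < k) := by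
    ext v
    simp only [SimpleGraph.mem_neighborFinset, mem_filter, mem_univ, true_and]
    constructor
    · rintro ⟨h1, h2 | h2⟩
      · omega
      · exact h2
    · intro h1
      refine ⟨fun h => ?_, Or.inr h1⟩
      rw [h] at hu; omega
  rw [SimpleGraph.degree, h, card_filter_lt n k (le_trans hu u.2.le)]

lemma card_filter_ge (n k : ℕ) (hk : k ≤ n) :
    ((univ : Finset (Fin n)).filter (fun v : Fin n => k ≤ (v : ℕ))).card = n - k := by
  classical
  have h := Finset.card_filter_add_card_filter_not
    (s := (univ : Finset (Fin n))) (p := fun v : Fin n => (v : ℕ) < k)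
  have he : (univ : Finset (Fin n)).filter (fun v : Fin n => ¬ (v : ℕ) < k)
      = (univ : Finset (Fin n)).filter (fun v : Fin n => k ≤ (v : ℕ)) := by
    apply Finset.filter_congr; intro v _; simp [not_lt]
  rw [he, card_filter_lt n k hk, Finset.card_univ, Fintype.card_fin] at h
  omega

noncomputable def Wt (n k : ℕ) : Sym2 (Fin n) → ℝ :=
  Sym2.lift ⟨fun u v => f ((Mgraph n k).degree u) ((Mgraph n k).degree v),
    fun u v => f_symm ((Mgraph n k).degree u) ((Mgraph n k).degree v)⟩

lemma Wt_mk (n k : ℕ) (a b : Fin n) :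
    Wt n k s(a, b) = f (((Mgraph n k).degree a : ℕ) : ℝ) (((Mgraph n k).degree b : ℕ) : ℝ) :=
  rfl

lemma sum_Wt (n k : ℕ) (h1 : 1 ≤ k) (h2 : k < n) :
    ∑ e ∈ (Mgraph n k).edgeFinset, Wt n k e
      = (k * (n - k) : ℕ) * f ((n - 1 : ℕ) : ℝ) (k : ℝ) := by
  classical
  have hadj : ∀ a b : Fin n, (Mgraph n k).Adj a b ↔ (a ≠ b ∧ ((a : ℕ) < k ∨ (b : ℕ) < k)) := by
    intro a b; rfl
  have hzero : ∀ a b : Fin n, (a : ℕ) < k → (b : ℕ) < k → Wt n k s(a, b) = 0 := by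
    intro a b ha hb
    rw [Wt_mk, deg_lt n k a ha, deg_lt n k b hb]
    unfold f; simp
  have hval : ∀ a b : Fin n, (a : ℕ) < k → k ≤ (b : ℕ) →
      Wt n k s(a, b) = f ((n - 1 : ℕ) : ℝ) (k : ℝ) := by
    intro a b ha hb
    rw [Wt_mk, deg_lt n k a ha, deg_ge n k b hb]
  set p : Sym2 (Fin n) → Prop := fun e => ∃ a ∈ e, k ≤ (a : ℕ) with hp
  have step1 : ∑ e ∈ (Mgraph n k).edgeFinset, Wt n k e
      = ∑ e ∈ (Mgraph n k).edgeFinset.filter p, Wt n k e := by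
    refine (Finset.sum_filter_of_ne ?_).symm
    intro x hx hne
    induction x using Sym2.ind with
    | _ a b =>
      rw [SimpleGraph.mem_edgeFinset, SimpleGraph.mem_edgeSet, hadj] at hx
      by_contra hpx
      push_neg at hpx
      exact hne (hzero a b (hpx a (Sym2.mem_mk_left a b)) (hpx b (Sym2.mem_mk_right a b)))
  have step2 : ∀ e ∈ (Mgraph n k).edgeFinset.filter p, Wt n k e
      = f ((n - 1 : ℕ) : ℝ) (k : ℝ) := by
    intro e he
    induction e using Sym2.ind with
    | _ a b =>
      rw [Finset.mem_filter, SimpleGraph.mem_edgeFinset, SimpleGraph.mem_edgeSet, hadj] at he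
      obtain ⟨⟨hne, hor⟩, c, hc, hkc⟩ := he
      rw [Sym2.mem_iff] at hc
      have hcase : ((a : ℕ) < k ∧ k ≤ (b : ℕ)) ∨ ((b : ℕ) < k ∧ k ≤ (a : ℕ)) := by
        rcases hc with rfl | rfl <;> rcases hor with h | h <;> omega
      rcases hcase with ⟨h1', h2'⟩ | ⟨h1', h2'⟩
      · exact hval a b h1' h2'
      · rw [Sym2.eq_swap]; exact hval b a h1' h2'
  have step3 : ((Mgraph n k).edgeFinset.filter p).card = k * (n - k) := by
    have hcard : (((univ : Finset (Fin n)).filter (fun a : Fin n => (a : ℕ) < k)) ×ˢ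
        ((univ : Finset (Fin n)).filter (fun b : Fin n => k ≤ (b : ℕ)))).card
        = k * (n - k) := by
      rw [Finset.card_product, card_filter_lt n k h2.le, card_filter_ge n k h2.le]
    rw [← hcard]
    refine (Finset.card_bij (fun x _ => s(x.1, x.2)) ?_ ?_ ?_).symm
    · rintro ⟨a, b⟩ hab
      simp only [Finset.mem_product, Finset.mem_filter, Finset.mem_univ, true_and] at hab
      obtain ⟨ha, hb⟩ := hab
      rw [Finset.mem_filter, SimpleGraph.mem_edgeFinset, SimpleGraph.mem_edgeSet, hadj]
      exact ⟨⟨fun h => by have := congrArg Fin.val h; simp at this; omega, Or.inl ha⟩,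
        b, Sym2.mem_mk_right a b, hb⟩
    · rintro ⟨a, b⟩ hab ⟨a', b'⟩ hab' heq
      simp only [Finset.mem_product, Finset.mem_filter, Finset.mem_univ, true_and] at hab hab'
      obtain ⟨ha, hb⟩ := hab
      obtain ⟨ha', hb'⟩ := hab'
      simp only [Sym2.eq_iff] at heq
      rcases heq with ⟨h3, h4⟩ | ⟨h3, h4⟩
      · simp [Prod.ext_iff, h3, h4]
      · exfalso; rw [h3] at ha; omega
    · intro e he
      induction e using Sym2.ind with
      | _ a b =>
        rw [Finset.mem_filter, SimpleGraph.mem_edgeFinset, SimpleGraph.mem_edgeSet, hadj] at he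
        obtain ⟨⟨hne, hor⟩, c, hc, hkc⟩ := he
        rw [Sym2.mem_iff] at hc
        have hcase : ((a : ℕ) < k ∧ k ≤ (b : ℕ)) ∨ ((b : ℕ) < k ∧ k ≤ (a : ℕ)) := by
          rcases hc with rfl | rfl <;> rcases hor with h | h <;> omega
        rcases hcase with ⟨h1', h2'⟩ | ⟨h1', h2'⟩
        · refine ⟨(a, b), ?_, rfl⟩
          simp only [Finset.mem_product, Finset.mem_filter, Finset.mem_univ, true_and]
          exact ⟨h1', h2'⟩
        · refine ⟨(b, a), ?_, Sym2.eq_swap⟩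
          simp only [Finset.mem_product, Finset.mem_filter, Finset.mem_univ, true_and]
          exact ⟨h1', h2'⟩
  rw [step1, Finset.sum_congr rfl step2, Finset.sum_const, step3, nsmul_eq_mul]

lemma SO5_Mgraph (n k : ℕ) (h1 : 1 ≤ k) (h2 : k < n) :
    SO5 (Mgraph n k)
      = 2 * Real.pi * ((k * (n - k) : ℕ) * f ((n - 1 : ℕ) : ℝ) (k : ℝ)) := by
  unfold SO5
  show 2 * Real.pi * ∑ e ∈ (Mgraph n k).edgeFinset, Wt n k e = _
  rw [sum_Wt n k h1 h2]

lemma SO5_congr {V : Type*} [Fintype V] [DecidableEq V] (G H : SimpleGraph V)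
    (hGH : G = H) [instG : DecidableRel G.Adj] [instH : DecidableRel H.Adj] :
    SO5 G = SO5 H := by
  subst hGH
  exact congrArg (fun i : DecidableRel G.Adj => @SO5 V _ _ G i)
    (Subsingleton.elim instG instH)

lemma SO5_star_eq (n : ℕ) : SO5 (starGraph n) = SO5 (Mgraph n 1) := by
  apply SO5_congr
  ext u v
  show (u ≠ v ∧ ((u : ℕ) = 0 ∨ (v : ℕ) = 0)) ↔ (u ≠ v ∧ ((u : ℕ) < 1 ∨ (v : ℕ) < 1))
  simp [Nat.lt_one_iff]

lemma core_ineq (N k : ℝ) (hN : 5 ≤ N) (hk2 : 2 ≤ k) (hkN : k ≤ N - 2)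
    (hP : N * (N - 2) * ((20 * N - 5) * (N - 1) + 10 * k ^ 2)
        < k * (N - k) * ((N - 1) ^ 2 - k ^ 2) * (20 * N - 6)) :
    (N - 1) * f (N - 1) 1 < k * (N - k) * f (N - 1) k := by
  have hx : (4 : ℝ) ≤ N - 1 := by linarith
  have hx0 : (0 : ℝ) < N - 1 := by linarith
  unfold f
  rw [abs_of_nonneg (by nlinarith : (0:ℝ) ≤ (N-1)^2 - 1^2),
      abs_of_nonneg (by nlinarith : (0:ℝ) ≤ (N-1)^2 - k^2)]
  set s := Real.sqrt 2 with hs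
  set u := Real.sqrt ((N-1)^2 + 1^2) with hu
  set t := Real.sqrt ((N-1)^2 + k^2) with ht
  have hs0 : 0 ≤ s := Real.sqrt_nonneg 2
  have hu0 : 0 ≤ u := Real.sqrt_nonneg _
  have ht0 : 0 ≤ t := Real.sqrt_nonneg _
  have hs15 : s ≤ 3/2 := by
    rw [hs, show (3/2 : ℝ) = Real.sqrt ((3/2)^2) from (Real.sqrt_sq (by norm_num)).symm]
    exact Real.sqrt_le_sqrt (by norm_num)
  have hs14 : 7/5 ≤ s := by
    rw [hs, show (7/5 : ℝ) = Real.sqrt ((7/5)^2) from (Real.sqrt_sq (by norm_num)).symm]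
    exact Real.sqrt_le_sqrt (by norm_num)
  have hulb : N - 1 ≤ u := by
    have h' : Real.sqrt ((N-1)^2) ≤ u := Real.sqrt_le_sqrt (by nlinarith)
    rwa [Real.sqrt_sq (le_of_lt hx0)] at h'
  have htub : t ≤ (N - 1) + k^2 / (2 * (N - 1)) := by
    rw [ht, show (N - 1) + k^2 / (2 * (N - 1))
        = Real.sqrt (((N - 1) + k^2 / (2 * (N - 1)))^2) from
        (Real.sqrt_sq (by positivity)).symm]
    apply Real.sqrt_le_sqrt
    have h4 : (0:ℝ) < 4 * (N-1)^2 := by positivity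
    have : ((N - 1) + k^2 / (2 * (N - 1)))^2
        = (N-1)^2 + k^2 + (k^2/(2*(N-1)))^2 := by field_simp; ring
    nlinarith [sq_nonneg (k^2/(2*(N-1)))]
  have hD1 : 0 < s + 2 * u := by nlinarith
  have hDk : 0 < s + 2 * t := by nlinarith
  rw [mul_div_assoc', mul_div_assoc', div_lt_div_iff₀ hD1 hDk]
  have hA : (0:ℝ) < (N-1) * ((N-1)^2 - 1^2) := by nlinarith
  have hB : (0:ℝ) < k * (N - k) * ((N-1)^2 - k^2) := by nlinarith
  have c1 : (N-1) * ((N-1)^2 - 1^2) * (s + 2*t)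
      ≤ (N-1) * ((N-1)^2 - 1^2) * (3/2 + 2*(N-1) + k^2/(N-1)) := by
    apply mul_le_mul_of_nonneg_left _ hA.le
    have : 2 * (k^2 / (2 * (N-1))) = k^2 / (N-1) := by field_simp
    linarith [htub]
  have c3 : (N-1) * ((N-1)^2 - 1^2) * (3/2 + 2*(N-1) + k^2/(N-1))
      < k * (N - k) * ((N-1)^2 - k^2) * (7/5 + 2*(N-1)) := by
    rw [show (3/2 + 2*(N-1) + k^2/(N-1)) = (3/2*(N-1) + 2*(N-1)^2 + k^2)/(N-1) by
      field_simp, mul_div_assoc', div_lt_iff₀ hx0]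
    have hmul := mul_lt_mul_of_pos_left hP (show (0:ℝ) < (N-1)/10 by linarith)
    linarith [hmul]
  have c4 : k * (N - k) * ((N-1)^2 - k^2) * (7/5 + 2*(N-1))
      ≤ k * (N - k) * ((N-1)^2 - k^2) * (s + 2*u) := by
    apply mul_le_mul_of_nonneg_left _ hB.le
    linarith
  calc (N-1) * ((N-1)^2 - 1^2) * (s + 2*t)
      ≤ (N-1) * ((N-1)^2 - 1^2) * (3/2 + 2*(N-1) + k^2/(N-1)) := c1
    _ < k * (N - k) * ((N-1)^2 - k^2) * (7/5 + 2*(N-1)) := c3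
    _ ≤ k * (N - k) * ((N-1)^2 - k^2) * (s + 2*u) := c4

lemma c0_bounds (c : ℝ) (h0 : 0 < c) (h1 : c < 1)
    (hroot : 6 * c ^ 5 - 4 * c ^ 4 + 6 * c ^ 3 - 6 * c ^ 2 - 4 * c + 2 = 0) :
    0.365 < c ∧ c < 0.3651 := by
  have hq : 3 * c ^ 4 + c ^ 3 + 4 * c ^ 2 + c - 1 = 0 := by
    have hfac : 6 * c ^ 5 - 4 * c ^ 4 + 6 * c ^ 3 - 6 * c ^ 2 - 4 * c + 2
        = 2 * (c - 1) * (3 * c ^ 4 + c ^ 3 + 4 * c ^ 2 + c - 1) := by ring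
    rw [hfac] at hroot
    rcases mul_eq_zero.mp hroot with h | h
    · rcases mul_eq_zero.mp h with h' | h'
      · norm_num at h'
      · exact absurd h' (sub_ne_zero.2 (ne_of_lt h1))
    · exact h
  constructor
  · by_contra h
    push_neg at h
    have h2 := pow_le_pow_left₀ h0.le h 2
    have h3 := pow_le_pow_left₀ h0.le h 3
    have h4 := pow_le_pow_left₀ h0.le h 4
    norm_num at h2 h3 h4
    nlinarith [h2, h3, h4]
  · by_contra h
    push_neg at h
    have hb0 : (0:ℝ) ≤ (0.3651:ℝ) := by norm_num
    have h2 := pow_le_pow_left₀ hb0 h 2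
    have h3 := pow_le_pow_left₀ hb0 h 3
    have h4 := pow_le_pow_left₀ hb0 h 4
    norm_num at h2 h3 h4
    nlinarith [h2, h3, h4]

lemma bigN_ineq (N K : ℝ) (hN : 12 ≤ N) (hk2 : 2 ≤ K) (hlb : 0.365 * N ≤ K)
    (hub : K ≤ 0.3651 * N + 1) :
    N * (N - 2) * ((20 * N - 5) * (N - 1) + 10 * K ^ 2)
      < K * (N - K) * ((N - 1) ^ 2 - K ^ 2) * (20 * N - 6) := by
  have hA : (0:ℝ) ≤ K - 0.365 * N := by linarith
  have hB : (0:ℝ) ≤ 0.3651 * N + 1 - K := by linarith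
  have hC : (0:ℝ) ≤ N - 12 := by linarith
  have hN0 : (0:ℝ) < N := by linarith
  nlinarith [mul_nonneg hA hB, mul_nonneg (mul_nonneg hA hB) hN0.le,
    mul_nonneg (mul_nonneg (mul_nonneg hA hB) hN0.le) hN0.le,
    mul_nonneg (mul_nonneg hA hC) hN0.le,
    mul_nonneg (mul_nonneg (mul_nonneg hA hC) hN0.le) hN0.le,
    mul_nonneg (mul_nonneg (mul_nonneg hB hC) hN0.le) hN0.le,
    mul_nonneg (mul_nonneg (mul_nonneg hC hC) hN0.le) hN0.le,
    mul_nonneg (mul_nonneg hA hA) hN0.le, mul_nonneg (mul_nonneg hB hB) hN0.le,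
    sq_nonneg (N - 12), sq_nonneg K, mul_pos hN0 hN0]

lemma hP_lemma (n k : ℕ) (hn : 5 ≤ n) (c₀ : ℝ) (hb1 : 0.365 < c₀) (hb2 : c₀ < 0.3651)
    (hklb : c₀ * (n : ℝ) ≤ (k : ℝ)) (hkub : (k : ℝ) < c₀ * (n : ℝ) + 1) (hk2 : 2 ≤ k) :
    (n : ℝ) * ((n : ℝ) - 2) * ((20 * (n : ℝ) - 5) * ((n : ℝ) - 1) + 10 * (k : ℝ) ^ 2)
      < (k : ℝ) * ((n : ℝ) - (k : ℝ)) * (((n : ℝ) - 1) ^ 2 - (k : ℝ) ^ 2)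
        * (20 * (n : ℝ) - 6) := by
  rcases lt_or_ge n 12 with h12 | h12
  · have hval : (n = 5 ∧ k = 2) ∨ (n = 6 ∧ k = 3) ∨ (n = 7 ∧ k = 3) ∨ (n = 8 ∧ k = 3)
        ∨ (n = 9 ∧ k = 4) ∨ (n = 10 ∧ k = 4) ∨ (n = 11 ∧ k = 5) := by
      interval_cases n
      all_goals (push_cast at hklb hkub)
      · refine Or.inl ⟨rfl, ?_⟩
        have hup : (k : ℝ) < 3 := by nlinarith
        have : k < 3 := by exact_mod_cast hup
        omega
      · refine Or.inr (Or.inl ⟨rfl, ?_⟩)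
        have hlo : (2 : ℝ) < (k : ℝ) := by nlinarith
        have hup : (k : ℝ) < 4 := by nlinarith
        have h1 : 2 < k := by exact_mod_cast hlo
        have h2 : k < 4 := by exact_mod_cast hup
        omega
      · refine Or.inr (Or.inr (Or.inl ⟨rfl, ?_⟩))
        have hlo : (2 : ℝ) < (k : ℝ) := by nlinarith
        have hup : (k : ℝ) < 4 := by nlinarith
        have h1 : 2 < k := by exact_mod_cast hlo
        have h2 : k < 4 := by exact_mod_cast hup
        omega
      · refine Or.inr (Or.inr (Or.inr (Or.inl ⟨rfl, ?_⟩)))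
        have hlo : (2 : ℝ) < (k : ℝ) := by nlinarith
        have hup : (k : ℝ) < 4 := by nlinarith
        have h1 : 2 < k := by exact_mod_cast hlo
        have h2 : k < 4 := by exact_mod_cast hup
        omega
      · refine Or.inr (Or.inr (Or.inr (Or.inr (Or.inl ⟨rfl, ?_⟩))))
        have hlo : (3 : ℝ) < (k : ℝ) := by nlinarith
        have hup : (k : ℝ) < 5 := by nlinarith
        have h1 : 3 < k := by exact_mod_cast hlo
        have h2 : k < 5 := by exact_mod_cast hup
        omega
      · refine Or.inr (Or.inr (Or.inr (Or.inr (Or.inr (Or.inl ⟨rfl, ?_⟩)))))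
        have hlo : (3 : ℝ) < (k : ℝ) := by nlinarith
        have hup : (k : ℝ) < 5 := by nlinarith
        have h1 : 3 < k := by exact_mod_cast hlo
        have h2 : k < 5 := by exact_mod_cast hup
        omega
      · refine Or.inr (Or.inr (Or.inr (Or.inr (Or.inr (Or.inr ⟨rfl, ?_⟩)))))
        have hlo : (4 : ℝ) < (k : ℝ) := by nlinarith
        have hup : (k : ℝ) < 6 := by nlinarith
        have h1 : 4 < k := by exact_mod_cast hlo
        have h2 : k < 6 := by exact_mod_cast hup
        omega
    rcases hval with ⟨hn', hk'⟩ | ⟨hn', hk'⟩ | ⟨hn', hk'⟩ | ⟨hn', hk'⟩ | ⟨hn', hk'⟩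
        | ⟨hn', hk'⟩ | ⟨hn', hk'⟩ <;> subst hn' <;> subst hk' <;> norm_num
  · have hN12 : (12 : ℝ) ≤ (n : ℝ) := by exact_mod_cast h12
    have hk2' : (2 : ℝ) ≤ (k : ℝ) := by exact_mod_cast hk2
    have hlb : 0.365 * (n : ℝ) ≤ (k : ℝ) := by nlinarith
    have hub : (k : ℝ) ≤ 0.3651 * (n : ℝ) + 1 := by nlinarith
    exact bigN_ineq (n : ℝ) (k : ℝ) hN12 hk2' hlb hub

end Aux

/-- For `n ≥ 5` the maximum of `SO₅(M_{n,i})` over `i ∈ {⌊c₀n⌋ − 1, ⌊c₀n⌋, ⌈c₀n⌉}`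
strictly exceeds `SO₅(S_n)`, where `c₀` is the unique root in `(0,1)` of
`6c⁵ − 4c⁴ + 6c³ − 6c² − 4c + 2 = 0`. -/
theorem max_SO5_Mgraph_gt_star (n : ℕ) (hn : 5 ≤ n)
    (c₀ : ℝ) (hc₀ : c₀ ∈ Set.Ioo (0 : ℝ) 1)
    (hroot : 6 * c₀ ^ 5 - 4 * c₀ ^ 4 + 6 * c₀ ^ 3 - 6 * c₀ ^ 2 - 4 * c₀ + 2 = 0) :
    max (SO5 (Mgraph n (⌊c₀ * n⌋₊ - 1)))
      (max (SO5 (Mgraph n ⌊c₀ * n⌋₊)) (SO5 (Mgraph n ⌈c₀ * n⌉₊))) > SO5 (starGraph n) := by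
  obtain ⟨hc0, hc1⟩ := hc₀
  obtain ⟨hb1, hb2⟩ := c0_bounds c₀ hc0 hc1 hroot
  have hn5r : (5 : ℝ) ≤ (n : ℝ) := by exact_mod_cast hn
  set k := ⌈c₀ * (n : ℝ)⌉₊ with hkdef
  have hnpos : (0 : ℝ) < (n : ℝ) := by linarith
  have hcn : (0 : ℝ) < c₀ * (n : ℝ) := mul_pos hc0 hnpos
  have hklb : c₀ * (n : ℝ) ≤ (k : ℝ) := Nat.le_ceil _
  have hkub : (k : ℝ) < c₀ * (n : ℝ) + 1 := Nat.ceil_lt_add_one hcn.le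
  have hk2 : 2 ≤ k := by
    have h1 : (1 : ℝ) < (k : ℝ) := by nlinarith
    have h1' : 1 < k := by exact_mod_cast h1
    omega
  have hkn3 : (k : ℝ) < (n : ℝ) - 2 := by nlinarith
  have hkn : k + 2 < n := by
    have h' : ((k : ℝ) + 2) < (n : ℝ) := by linarith
    exact_mod_cast h'
  have hP := hP_lemma n k hn c₀ hb1 hb2 hklb hkub hk2
  have hcore := core_ineq (n : ℝ) (k : ℝ) hn5r (by exact_mod_cast hk2)
    (by linarith) hP
  have h1n : (1 : ℕ) ≤ n := by omega
  have hcast1 : ((n - 1 : ℕ) : ℝ) = (n : ℝ) - 1 := by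
    push_cast [Nat.cast_sub h1n]; ring
  have hSO5k : SO5 (Mgraph n k)
      = 2 * Real.pi * (((k : ℝ) * ((n : ℝ) - (k : ℝ))) * f ((n : ℝ) - 1) (k : ℝ)) := by
    rw [SO5_Mgraph n k (by omega) (by omega), hcast1]
    have : ((k * (n - k) : ℕ) : ℝ) = (k : ℝ) * ((n : ℝ) - (k : ℝ)) := by
      push_cast [Nat.cast_sub (by omega : k ≤ n)]; ring
    rw [this]
  have hSO51 : SO5 (Mgraph n 1)
      = 2 * Real.pi * (((n : ℝ) - 1) * f ((n : ℝ) - 1) 1) := by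
    rw [SO5_Mgraph n 1 (le_refl 1) (by omega), hcast1]
    have : ((1 * (n - 1) : ℕ) : ℝ) = (n : ℝ) - 1 := by
      push_cast [Nat.cast_sub h1n]; ring
    rw [this]
    norm_num
  have hlt : SO5 (starGraph n) < SO5 (Mgraph n k) := by
    rw [SO5_star_eq n, hSO51, hSO5k]
    have h2pi : (0 : ℝ) < 2 * Real.pi := by positivity
    exact mul_lt_mul_of_pos_left hcore h2pi
  exact lt_of_lt_of_le hlt ((le_max_right _ _).trans (le_max_right _ _))
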